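/- arXiv:2010.08767 — 2 statements merged into one kernel-verified Lean document; each statement's English description precedes it below -/
import Mathlib

section
/- Let $S_n = \sum_{k=1}^n X_k$ where $X_k = Y_\alpha - Y_\beta$ is the difference of independent exponential random variables with rates $\alpha > \beta > 0$. Then for $x > 0$, $\mathbb{P}\big(\sup_{n \ge 0} S_n \le x\big) = 1 - \frac{\beta}{\alpha} e^{-(\alpha - \beta)x}$. -/
open MeasureTheory ProbabilityTheory Real Set
open scoped ENNReal NNReal

lemma real_exp_integral_Ioi {b d : ℝ} (hb : 0 < b) :
    ∫ a in Ioi d, Real.exp (-(b * a)) = Real.exp (-(b * d)) / b := by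
  have hderiv : ∀ a ∈ Ici d, HasDerivAt (fun a => -Real.exp (-(b * a)) / b)
      (Real.exp (-(b * a))) a := by
    intro a _
    have h1 : HasDerivAt (fun a : ℝ => -(b * a)) (-b) a := by
      simpa using (hasDerivAt_id a).const_mul (-b)
    have := (h1.exp.neg.div_const b)
    exact this.congr_deriv (by field_simp)
  have hint : IntegrableOn (fun a => Real.exp (-(b * a))) (Ioi d) := by
    simpa [neg_mul] using exp_neg_integrableOn_Ioi d hb
  have htend : Filter.Tendsto (fun a => -Real.exp (-(b * a)) / b) Filter.atTop (nhds 0) := by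
    have : Filter.Tendsto (fun a : ℝ => b * a) Filter.atTop Filter.atTop :=
      Filter.Tendsto.const_mul_atTop hb Filter.tendsto_id
    have h2 := (Real.tendsto_exp_neg_atTop_nhds_zero.comp this)
    have : Filter.Tendsto (fun a => -Real.exp (-(b * a)) / b) Filter.atTop
        (nhds (-0 / b)) := (h2.neg.div_const b)
    simpa using this
  have := MeasureTheory.integral_Ioi_of_hasDerivAt_of_tendsto' hderiv hint htend
  rw [this]
  ring

lemma exp_tail_lintegral {r s d : ℝ} (hr : 0 < r) (hs : s < r) (hd : 0 ≤ d) :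
    ∫⁻ a in Ioi d, ENNReal.ofReal (Real.exp (s * a)) ∂(expMeasure r)
      = ENNReal.ofReal (r / (r - s) * Real.exp ((s - r) * d)) := by
  have hpdf : expMeasure r = (volume : Measure ℝ).withDensity (exponentialPDF r) := rfl
  have hbs : 0 < r - s := by linarith
  have hm : Measurable (exponentialPDF r) := (measurable_exponentialPDFReal r).ennreal_ofReal
  rw [hpdf, MeasureTheory.restrict_withDensity measurableSet_Ioi,
    lintegral_withDensity_eq_lintegral_mul _ hm (by fun_prop)]
  have hcong : ∀ a ∈ Ioi d, (exponentialPDF r * fun a => ENNReal.ofReal (Real.exp (s * a))) a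
      = ENNReal.ofReal (r * Real.exp (-((r - s) * a))) := by
    intro a ha
    have ha0 : (0:ℝ) ≤ a := le_trans hd (le_of_lt ha)
    simp only [Pi.mul_apply, exponentialPDF_of_nonneg ha0]
    rw [← ENNReal.ofReal_mul (by positivity)]
    congr 1
    rw [mul_assoc, ← Real.exp_add]
    ring_nf
  rw [setLIntegral_congr_fun measurableSet_Ioi hcong]
  have hint : Integrable (fun a => r * Real.exp (-((r - s) * a)))
      ((volume : Measure ℝ).restrict (Ioi d)) := by
    apply Integrable.const_mul
    have := exp_neg_integrableOn_Ioi d hbs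
    simpa [show ∀ a:ℝ, -((r-s)*a) = (s-r)*a from fun a => by ring, IntegrableOn] using this
  rw [← MeasureTheory.ofReal_integral_eq_lintegral_ofReal hint
    (Filter.Eventually.of_forall (fun a => by positivity))]
  congr 1
  rw [MeasureTheory.integral_const_mul, real_exp_integral_Ioi hbs]
  rw [show -((r-s)*d) = (s-r)*d by ring]
  field_simp


lemma expMeasure_Iic_zero {r : ℝ} : expMeasure r (Iic 0) = 0 := by
  have h : expMeasure r (Iic 0) = ∫⁻ a in Iic 0, exponentialPDF r a :=
    withDensity_apply _ measurableSet_Iic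
  rw [h]
  have hs : Iic (0:ℝ) = Iio 0 ∪ {0} := by
    ext a; simp [le_iff_lt_or_eq]
  rw [hs, lintegral_union (measurableSet_singleton 0) (by simp)]
  rw [lintegral_exponentialPDF_of_nonpos le_rfl,
    setLIntegral_measure_zero _ _ (by simp)]
  simp

lemma exp_full_lintegral {r s : ℝ} (hr : 0 < r) (hs : s < r) :
    ∫⁻ a, ENNReal.ofReal (Real.exp (s * a)) ∂(expMeasure r)
      = ENNReal.ofReal (r / (r - s)) := by
  rw [← lintegral_add_compl (fun a => ENNReal.ofReal (Real.exp (s * a)))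
    (measurableSet_Iic (α := ℝ) (a := 0))]
  rw [setLIntegral_measure_zero _ _ expMeasure_Iic_zero, compl_Iic,
    show Ioi (0:ℝ) = Ioi 0 from rfl]
  rw [exp_tail_lintegral hr hs le_rfl]
  simp

lemma ae_nonneg_expMeasure {r : ℝ} {f g : ℝ → ℝ≥0∞} (h : ∀ b, 0 ≤ b → f b = g b) :
    ∫⁻ b, f b ∂(expMeasure r) = ∫⁻ b, g b ∂(expMeasure r) := by
  apply lintegral_congr_ae
  rw [Filter.eventuallyEq_iff_exists_mem]
  refine ⟨Ici 0, ?_, fun b hb => h b hb⟩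
  rw [MeasureTheory.mem_ae_iff]
  have : (Ici (0:ℝ))ᶜ = Iio 0 := by simp
  rw [this]
  exact measure_mono_null Iio_subset_Iic_self expMeasure_Iic_zero

lemma law_full_lintegral {α β s : ℝ} (hα : 0 < α) (hβ : 0 < β) (hs1 : -β < s) (hs2 : s < α) :
    ∫⁻ t, ENNReal.ofReal (Real.exp (s * t))
        ∂(Measure.map (fun p : ℝ × ℝ => p.1 - p.2) ((expMeasure α).prod (expMeasure β)))
      = ENNReal.ofReal (α / (α - s) * (β / (β + s))) := by
  haveI := isProbabilityMeasure_expMeasure hα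
  haveI := isProbabilityMeasure_expMeasure hβ
  rw [lintegral_map (by fun_prop)
    (show Measurable (fun p : ℝ × ℝ => p.1 - p.2) from measurable_fst.sub measurable_snd)]
  rw [lintegral_prod_symm' _ (by fun_prop)]
  have inner : ∀ b : ℝ, ∫⁻ a, ENNReal.ofReal (Real.exp (s * (a - b))) ∂(expMeasure α)
      = ENNReal.ofReal (Real.exp (-s * b)) * ENNReal.ofReal (α / (α - s)) := by
    intro b
    have h1 : ∀ a : ℝ, ENNReal.ofReal (Real.exp (s * (a - b)))
        = ENNReal.ofReal (Real.exp (-s * b)) * ENNReal.ofReal (Real.exp (s * a)) := by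
      intro a
      rw [← ENNReal.ofReal_mul (by positivity), ← Real.exp_add]
      congr 2
      ring
    simp_rw [h1]
    rw [lintegral_const_mul _ (by fun_prop), exp_full_lintegral hα hs2]
  simp only [inner]
  rw [lintegral_mul_const _ (by fun_prop), exp_full_lintegral hβ (by linarith)]
  rw [← ENNReal.ofReal_mul (div_nonneg hβ.le (by linarith))]
  congr 1
  have : β - -s = β + s := by ring
  rw [this]
  ring

lemma law_tail_lintegral {α β s c : ℝ} (hα : 0 < α) (hβ : 0 < β) (hs1 : 0 ≤ s) (hs2 : s < α)
    (hc : 0 ≤ c) :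
    ∫⁻ t in Ioi c, ENNReal.ofReal (Real.exp (s * t))
        ∂(Measure.map (fun p : ℝ × ℝ => p.1 - p.2) ((expMeasure α).prod (expMeasure β)))
      = ENNReal.ofReal (α / (α - s) * (β / (β + α)) * Real.exp ((s - α) * c)) := by
  haveI := isProbabilityMeasure_expMeasure hα
  haveI := isProbabilityMeasure_expMeasure hβ
  have hms : ∀ u : ℝ, Measurable fun a : ℝ => ENNReal.ofReal (Real.exp (u * a)) :=
    fun u => (Real.measurable_exp.comp (measurable_const_mul u)).ennreal_ofReal
  have hmf : Measurable ((Ioi c).indicator fun t => ENNReal.ofReal (Real.exp (s * t))) :=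
    (hms s).indicator measurableSet_Ioi
  rw [← lintegral_indicator measurableSet_Ioi]
  rw [lintegral_map hmf
    (show Measurable (fun p : ℝ × ℝ => p.1 - p.2) from measurable_fst.sub measurable_snd)]
  rw [lintegral_prod_symm'
    (fun a : ℝ × ℝ => (Ioi c).indicator (fun t => ENNReal.ofReal (Real.exp (s * t))) (a.1 - a.2))
    (hmf.comp (measurable_fst.sub measurable_snd))]
  have inner : ∀ b : ℝ, 0 ≤ b →
      (∫⁻ a, (Ioi c).indicator (fun t => ENNReal.ofReal (Real.exp (s * t))) (a - b)
        ∂(expMeasure α))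
      = ENNReal.ofReal (α / (α - s) * Real.exp ((s - α) * c)) *
          ENNReal.ofReal (Real.exp (-α * b)) := by
    intro b hb
    have h1 : ∀ a : ℝ, (Ioi c).indicator (fun t => ENNReal.ofReal (Real.exp (s * t))) (a - b)
        = (Ioi (c + b)).indicator
            (fun a => ENNReal.ofReal (Real.exp (-s * b)) * ENNReal.ofReal (Real.exp (s * a))) a := by
      intro a
      by_cases h : c + b < a
      · have hmem1 : a - b ∈ Ioi c := by
          rw [mem_Ioi]; linarith
        have hmem2 : a ∈ Ioi (c + b) := h
        rw [indicator_of_mem hmem1, indicator_of_mem hmem2,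
          ← ENNReal.ofReal_mul (Real.exp_nonneg _), ← Real.exp_add]
        congr 2
        ring
      · have hn1 : a - b ∉ Ioi c := fun hh => h (by have := mem_Ioi.mp hh; linarith)
        have hn2 : a ∉ Ioi (c + b) := fun hh => h (mem_Ioi.mp hh)
        rw [indicator_of_notMem hn1, indicator_of_notMem hn2]
    simp_rw [h1]
    rw [lintegral_indicator measurableSet_Ioi,
      lintegral_const_mul _ (hms s),
      exp_tail_lintegral hα hs2 (by linarith)]
    rw [← ENNReal.ofReal_mul (Real.exp_nonneg _),
      ← ENNReal.ofReal_mul (mul_nonneg (div_nonneg hα.le (by linarith)) (Real.exp_nonneg _))]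
    congr 1
    have hexp : (s - α) * (c + b) + -s * b = (s - α) * c + -α * b := by ring
    rw [mul_comm, mul_assoc, ← Real.exp_add, hexp, Real.exp_add, ← mul_assoc]
  rw [ae_nonneg_expMeasure inner]
  rw [lintegral_const_mul _ (hms (-α)),
    exp_full_lintegral hβ (by linarith)]
  rw [← ENNReal.ofReal_mul (mul_nonneg (div_nonneg hα.le (by linarith)) (Real.exp_nonneg _))]
  congr 1
  have : β - -α = β + α := by ring
  rw [this]
  ring

lemma key_split {Ω : Type*} [MeasurableSpace Ω] (P : Measure Ω) [IsProbabilityMeasure P]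
    (X : ℕ → Ω → ℝ) (hmeas : ∀ i, Measurable (X i))
    (hindep : iIndepFun X P)
    (μ : Measure ℝ) [IsProbabilityMeasure μ] (hlawn : ∀ k, P.map (X k) = μ)
    (n : ℕ) (H : (Fin n → ℝ) × ℝ → ℝ≥0∞) (hH : Measurable H) :
    ∫⁻ ω, H (fun i : Fin n => X i ω, X n ω) ∂P
      = ∫⁻ v, ∫⁻ t, H (v, t) ∂μ ∂(P.map (fun ω (i : Fin n) => X i ω)) := by
  have hY : Measurable (fun ω (i : Fin n) => X i ω) :=
    measurable_pi_lambda _ (fun i => hmeas i)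
  haveI : IsProbabilityMeasure (P.map (fun ω (i : Fin n) => X i ω)) :=
    Measure.isProbabilityMeasure_map hY.aemeasurable
  have hindep2 : IndepFun (fun ω (i : Fin n) => X i ω) (X n) P := by
    have h := hindep.indepFun_finset (Finset.range n) {n}
      (by simp [Finset.disjoint_left]; omega) hmeas
    have hφ : Measurable (fun (v : ↥(Finset.range n) → ℝ) (i : Fin n) =>
        v ⟨(i : ℕ), Finset.mem_range.mpr i.isLt⟩) :=
      measurable_pi_lambda _ (fun i => measurable_pi_apply _)
    have hψ : Measurable (fun (v : ↥({n} : Finset ℕ) → ℝ) =>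
        v ⟨n, Finset.mem_singleton_self n⟩) := measurable_pi_apply _
    exact h.comp hφ hψ
  have hmap : P.map (fun ω => ((fun i : Fin n => X i ω), X n ω))
      = (P.map (fun ω (i : Fin n) => X i ω)).prod μ := by
    rw [← hlawn n]
    exact (indepFun_iff_map_prod_eq_prod_map_map hY.aemeasurable
      (hmeas n).aemeasurable).mp hindep2
  rw [show (∫⁻ ω, H (fun i : Fin n => X i ω, X n ω) ∂P)
      = ∫⁻ p, H p ∂(P.map (fun ω => ((fun i : Fin n => X i ω), X n ω))) from
    (lintegral_map hH (hY.prodMk (hmeas n))).symm]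
  rw [hmap]
  exact lintegral_prod H hH.aemeasurable

lemma combo {Ω : Type*} [MeasurableSpace Ω] (P : Measure Ω) [IsProbabilityMeasure P]
    (X : ℕ → Ω → ℝ) (hmeas : ∀ i, Measurable (X i))
    (hindep : iIndepFun X P)
    (μ : Measure ℝ) [IsProbabilityMeasure μ] (hlawn : ∀ k, P.map (X k) = μ)
    (x : ℝ) (n : ℕ) (g : ℝ → ℝ → ℝ≥0∞) (hg : Measurable (Function.uncurry g))
    (F : ℝ → ℝ≥0∞) (hF : Measurable F) (hgF : ∀ s, s ≤ x → ∫⁻ t, g s t ∂μ = F s) :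
    ∫⁻ ω, ({ω : Ω | ∀ k ≤ n, (∑ i ∈ Finset.range k, X i ω) ≤ x}).indicator
        (fun ω => g (∑ i ∈ Finset.range n, X i ω) (X n ω)) ω ∂P
      = ∫⁻ ω, ({ω : Ω | ∀ k ≤ n, (∑ i ∈ Finset.range k, X i ω) ≤ x}).indicator
        (fun ω => F (∑ i ∈ Finset.range n, X i ω)) ω ∂P := by
  classical
  set ps : (Fin n → ℝ) → ℕ → ℝ :=
    fun v k => ∑ i ∈ Finset.range k, (if h : i < n then v ⟨i, h⟩ else 0) with hps_def
  have hpsY : ∀ (ω : Ω) (k : ℕ), k ≤ n →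
      ps (fun i : Fin n => X i ω) k = ∑ i ∈ Finset.range k, X i ω := by
    intro ω k hk
    refine Finset.sum_congr rfl (fun i hi => ?_)
    rw [dif_pos (lt_of_lt_of_le (Finset.mem_range.mp hi) hk)]
  have hpsm : ∀ k, Measurable (fun v => ps v k) := by
    intro k
    apply Finset.measurable_sum
    intro i _
    by_cases h : i < n
    · simp only [dif_pos h]
      exact measurable_pi_apply _
    · simp only [dif_neg h]
      exact measurable_const
  set Q : Set (Fin n → ℝ) := {v | ∀ k ≤ n, ps v k ≤ x} with hQ_def
  have hQ : MeasurableSet Q := by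
    have : Q = ⋂ (k : ℕ), ⋂ (_ : k ≤ n), {v | ps v k ≤ x} := by
      ext v; simp [hQ_def]
    rw [this]
    exact MeasurableSet.iInter (fun k => MeasurableSet.iInter
      (fun _ => measurableSet_le (hpsm k) measurable_const))
  have hmem : ∀ ω : Ω, ((fun i : Fin n => X i ω) ∈ Q)
      ↔ (∀ k ≤ n, (∑ i ∈ Finset.range k, X i ω) ≤ x) := by
    intro ω
    constructor
    · intro h k hk; rw [← hpsY ω k hk]; exact h k hk
    · intro h k hk; rw [hpsY ω k hk]; exact h k hk
  have key := key_split P X hmeas hindep μ hlawn n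
  -- first functional
  have h1 := key ((Q ×ˢ (univ : Set ℝ)).indicator (fun q => g (ps q.1 n) q.2))
    (((hg.comp (((hpsm n).comp measurable_fst).prodMk measurable_snd))).indicator
      (hQ.prod MeasurableSet.univ))
  have h2 := key ((Q ×ˢ (univ : Set ℝ)).indicator (fun q => F (ps q.1 n)))
    ((hF.comp ((hpsm n).comp measurable_fst)).indicator (hQ.prod MeasurableSet.univ))
  have e1 : ∀ ω : Ω, (Q ×ˢ (univ : Set ℝ)).indicator (fun q => g (ps q.1 n) q.2)
        ((fun i : Fin n => X i ω), X n ω)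
      = ({ω : Ω | ∀ k ≤ n, (∑ i ∈ Finset.range k, X i ω) ≤ x}).indicator
        (fun ω => g (∑ i ∈ Finset.range n, X i ω) (X n ω)) ω := by
    intro ω
    by_cases h : ∀ k ≤ n, (∑ i ∈ Finset.range k, X i ω) ≤ x
    · rw [indicator_of_mem (by exact mem_prod.mpr ⟨(hmem ω).mpr h, mem_univ _⟩),
        indicator_of_mem (by exact h)]
      rw [hpsY ω n le_rfl]
    · rw [indicator_of_notMem (by
        intro hc
        exact h ((hmem ω).mp (mem_prod.mp hc).1)),
        indicator_of_notMem (by exact h)]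
  have e2 : ∀ ω : Ω, (Q ×ˢ (univ : Set ℝ)).indicator (fun q => F (ps q.1 n))
        ((fun i : Fin n => X i ω), X n ω)
      = ({ω : Ω | ∀ k ≤ n, (∑ i ∈ Finset.range k, X i ω) ≤ x}).indicator
        (fun ω => F (∑ i ∈ Finset.range n, X i ω)) ω := by
    intro ω
    by_cases h : ∀ k ≤ n, (∑ i ∈ Finset.range k, X i ω) ≤ x
    · rw [indicator_of_mem (by exact mem_prod.mpr ⟨(hmem ω).mpr h, mem_univ _⟩),
        indicator_of_mem (by exact h)]
      rw [hpsY ω n le_rfl]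
    · rw [indicator_of_notMem (by
        intro hc
        exact h ((hmem ω).mp (mem_prod.mp hc).1)),
        indicator_of_notMem (by exact h)]
  have inner_eq : ∀ v : Fin n → ℝ,
      (∫⁻ t, (Q ×ˢ (univ : Set ℝ)).indicator (fun q => g (ps q.1 n) q.2) (v, t) ∂μ)
      = ∫⁻ t, (Q ×ˢ (univ : Set ℝ)).indicator (fun q => F (ps q.1 n)) (v, t) ∂μ := by
    intro v
    by_cases hv : v ∈ Q
    · have hl : ∀ t : ℝ, (Q ×ˢ (univ : Set ℝ)).indicator (fun q => g (ps q.1 n) q.2) (v, t)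
          = g (ps v n) t := fun t =>
        indicator_of_mem (mem_prod.mpr ⟨hv, mem_univ _⟩) _
      have hr : ∀ t : ℝ, (Q ×ˢ (univ : Set ℝ)).indicator (fun q => F (ps q.1 n)) (v, t)
          = F (ps v n) := fun t =>
        indicator_of_mem (mem_prod.mpr ⟨hv, mem_univ _⟩) _
      simp_rw [hl, hr]
      rw [lintegral_const, measure_univ, mul_one]
      exact hgF _ (hv n le_rfl)
    · have hl : ∀ t : ℝ, (Q ×ˢ (univ : Set ℝ)).indicator (fun q => g (ps q.1 n) q.2) (v, t)
          = 0 := fun t =>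
        indicator_of_notMem (fun hc => hv (mem_prod.mp hc).1) _
      have hr : ∀ t : ℝ, (Q ×ˢ (univ : Set ℝ)).indicator (fun q => F (ps q.1 n)) (v, t)
          = 0 := fun t =>
        indicator_of_notMem (fun hc => hv (mem_prod.mp hc).1) _
      simp_rw [hl, hr]
  calc ∫⁻ ω, ({ω : Ω | ∀ k ≤ n, (∑ i ∈ Finset.range k, X i ω) ≤ x}).indicator
        (fun ω => g (∑ i ∈ Finset.range n, X i ω) (X n ω)) ω ∂P
      = ∫⁻ ω, (Q ×ˢ (univ : Set ℝ)).indicator (fun q => g (ps q.1 n) q.2)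
          ((fun i : Fin n => X i ω), X n ω) ∂P := by
        exact lintegral_congr (fun ω => (e1 ω).symm)
    _ = ∫⁻ v, ∫⁻ t, (Q ×ˢ (univ : Set ℝ)).indicator (fun q => g (ps q.1 n) q.2) (v, t) ∂μ
          ∂(P.map (fun ω (i : Fin n) => X i ω)) := h1
    _ = ∫⁻ v, ∫⁻ t, (Q ×ˢ (univ : Set ℝ)).indicator (fun q => F (ps q.1 n)) (v, t) ∂μ
          ∂(P.map (fun ω (i : Fin n) => X i ω)) := lintegral_congr inner_eq
    _ = ∫⁻ ω, (Q ×ˢ (univ : Set ℝ)).indicator (fun q => F (ps q.1 n))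
          ((fun i : Fin n => X i ω), X n ω) ∂P := h2.symm
    _ = ∫⁻ ω, ({ω : Ω | ∀ k ≤ n, (∑ i ∈ Finset.range k, X i ω) ≤ x}).indicator
        (fun ω => F (∑ i ∈ Finset.range n, X i ω)) ω ∂P := lintegral_congr e2

theorem exponential_walk_sup_distribution {Ω : Type*} [MeasurableSpace Ω] (P : Measure Ω)
    [IsProbabilityMeasure P] (α β : ℝ) (hβ : 0 < β) (hαβ : β < α)
    (X : ℕ → Ω → ℝ) (hmeas : ∀ i, Measurable (X i))
    (hindep : iIndepFun X P)
    (hlaw : ∀ k, P.map (X k) =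
      Measure.map (fun p : ℝ × ℝ => p.1 - p.2) ((expMeasure α).prod (expMeasure β)))
    (x : ℝ) (hx : 0 < x) :
    (P {ω | ∀ n : ℕ, ∑ i ∈ Finset.range n, X i ω ≤ x}).toReal
      = 1 - β / α * Real.exp (-(α - β) * x) := by
  classical
  have hα : 0 < α := lt_trans hβ hαβ
  haveI := isProbabilityMeasure_expMeasure hα
  haveI := isProbabilityMeasure_expMeasure hβ
  set μ : Measure ℝ :=
    Measure.map (fun p : ℝ × ℝ => p.1 - p.2) ((expMeasure α).prod (expMeasure β)) with hμdef
  haveI : IsProbabilityMeasure μ :=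
    Measure.isProbabilityMeasure_map (measurable_fst.sub measurable_snd).aemeasurable
  set θ : ℝ := α - β with hθdef
  have hθ : 0 < θ := by simp [hθdef]; linarith
  set S : ℕ → Ω → ℝ := fun n ω => ∑ i ∈ Finset.range n, X i ω with hSdef
  set A : ℕ → Set Ω := fun n => {ω | ∀ k ≤ n, S k ω ≤ x} with hAdef
  have hSmeas : ∀ n, Measurable (S n) :=
    fun n => Finset.measurable_sum _ (fun i _ => hmeas i)
  have hAmeas : ∀ n, MeasurableSet (A n) := by
    intro n
    have : A n = ⋂ (k : ℕ), ⋂ (_ : k ≤ n), {ω | S k ω ≤ x} := by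
      ext ω; simp [hAdef]
    rw [this]
    exact MeasurableSet.iInter (fun k => MeasurableSet.iInter
      (fun _ => measurableSet_le (hSmeas k) measurable_const))
  have hS0 : ∀ ω, S 0 ω = 0 := fun ω => by simp [hSdef]
  have hSsucc : ∀ n ω, S (n + 1) ω = S n ω + X n ω :=
    fun n ω => Finset.sum_range_succ _ _
  have hA0 : A 0 = univ := by
    apply eq_univ_of_forall
    intro ω k hk
    rw [Nat.le_zero.mp hk, hS0]
    exact hx.le
  have hgm : ∀ u : ℝ, Measurable (fun s : ℝ => ENNReal.ofReal (Real.exp (u * s))) :=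
    fun u => (Real.measurable_exp.comp (measurable_const_mul u)).ennreal_ofReal
  set J : ℝ → ℕ → ℝ≥0∞ := fun u n =>
    ∫⁻ ω, (A n).indicator (fun ω => ENNReal.ofReal (Real.exp (u * S n ω))) ω ∂P with hJdef
  set p : ℕ → ℝ≥0∞ := fun n => P (A n ∩ {ω | x < S (n + 1) ω}) with hpdef
  set b : ℕ → ℝ≥0∞ := fun n =>
    ∫⁻ ω, (A n ∩ {ω | x < S (n + 1) ω}).indicator
      (fun ω => ENNReal.ofReal (Real.exp (θ * S (n + 1) ω))) ω ∂P with hbdef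
  -- step lemma
  have hstep : ∀ (u : ℝ) (Mu : ℝ≥0∞), (∫⁻ t, ENNReal.ofReal (Real.exp (u * t)) ∂μ = Mu) →
      ∀ n, ∫⁻ ω, (A n).indicator
          (fun ω => ENNReal.ofReal (Real.exp (u * S (n + 1) ω))) ω ∂P = J u n * Mu := by
    intro u Mu hMu n
    have hgu : Measurable (Function.uncurry fun s t : ℝ =>
        ENNReal.ofReal (Real.exp (u * s)) * ENNReal.ofReal (Real.exp (u * t))) :=
      ((hgm u).comp measurable_fst).mul ((hgm u).comp measurable_snd)
    have hcb := combo P X hmeas hindep μ hlaw x n _ hgu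
      (fun s => ENNReal.ofReal (Real.exp (u * s)) * Mu) ((hgm u).mul_const _)
      (fun s _ => by rw [lintegral_const_mul _ (hgm u), hMu])
    have hfe : (fun ω => ENNReal.ofReal (Real.exp (u * S (n + 1) ω))) = fun ω =>
        ENNReal.ofReal (Real.exp (u * S n ω)) * ENNReal.ofReal (Real.exp (u * X n ω)) := by
      funext ω
      rw [hSsucc n ω, ← ENNReal.ofReal_mul (Real.exp_nonneg _), ← Real.exp_add, mul_add]
    rw [hfe]
    rw [show (∫⁻ ω, (A n).indicator (fun ω => ENNReal.ofReal (Real.exp (u * S n ω)) *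
          ENNReal.ofReal (Real.exp (u * X n ω))) ω ∂P)
        = ∫⁻ ω, (A n).indicator (fun ω => ENNReal.ofReal (Real.exp (u * S n ω)) * Mu) ω ∂P
      from hcb]
    rw [lintegral_congr (g := fun ω =>
        (A n).indicator (fun ω => ENNReal.ofReal (Real.exp (u * S n ω))) ω * Mu)
      (fun ω => by by_cases h : ω ∈ A n <;> simp [h])]
    exact lintegral_mul_const _ (((hgm u).comp (hSmeas n)).indicator (hAmeas n))
  have hJ0 : ∀ u, J u 0 = 1 := by
    intro u
    simp only [hJdef]
    rw [hA0]
    simp only [indicator_univ, hS0, mul_zero, Real.exp_zero, ENNReal.ofReal_one]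
    simp
  -- moment facts
  have hM1 : ∫⁻ t, ENNReal.ofReal (Real.exp (θ * t)) ∂μ = 1 := by
    rw [hμdef, law_full_lintegral hα hβ (by rw [hθdef]; linarith) (by rw [hθdef]; linarith)]
    have h1 : α - θ = β := by rw [hθdef]; ring
    have h2 : β + θ = α := by rw [hθdef]; ring
    rw [h1, h2]
    have : α / β * (β / α) = 1 := by field_simp
    rw [this, ENNReal.ofReal_one]
  set v : ℝ := α / (α - θ/2) * (β / (β + θ/2)) with hvdef
  have hhalf1 : α - θ/2 = (α + β)/2 := by rw [hθdef]; ring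
  have hhalf2 : β + θ/2 = (α + β)/2 := by rw [hθdef]; ring
  have hv0 : 0 ≤ v := by
    rw [hvdef, hhalf1, hhalf2]
    positivity
  have hv1 : v < 1 := by
    rw [hvdef, hhalf1, hhalf2, div_mul_div_comm]
    rw [div_lt_one (by positivity)]
    nlinarith [mul_pos (sub_pos.mpr hαβ) (sub_pos.mpr hαβ)]
  have hMv : ∫⁻ t, ENNReal.ofReal (Real.exp (θ/2 * t)) ∂μ = ENNReal.ofReal v := by
    rw [hμdef, law_full_lintegral hα hβ (by rw [hθdef]; linarith) (by rw [hθdef]; linarith)]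
  have htail0 : ∀ c : ℝ, 0 ≤ c → μ (Ioi c) = ENNReal.ofReal (β/(β+α) * Real.exp (-α * c)) := by
    intro c hc
    have h := law_tail_lintegral (s := 0) (c := c) hα hβ le_rfl hα hc
    simp only [zero_mul, Real.exp_zero, ENNReal.ofReal_one] at h
    rw [setLIntegral_one] at h
    rw [hμdef, h]
    congr 1
    rw [sub_zero, div_self hα.ne', one_mul, zero_sub, neg_mul]
  have htailθ : ∀ c : ℝ, 0 ≤ c → ∫⁻ t in Ioi c, ENNReal.ofReal (Real.exp (θ * t)) ∂μ
      = ENNReal.ofReal (α/(β+α) * Real.exp (-β * c)) := by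
    intro c hc
    rw [hμdef, law_tail_lintegral hα hβ hθ.le (by rw [hθdef]; linarith) hc]
    congr 1
    have h1 : α - θ = β := by rw [hθdef]; ring
    have h2 : θ - α = -β := by rw [hθdef]; ring
    rw [h1, h2]
    have : α / β * (β / (β + α)) = α / (β + α) := by field_simp
    rw [this, neg_mul]
  -- p n in terms of J α n
  have hp_eq : ∀ n, p n = ENNReal.ofReal (β/(β+α) * Real.exp (-α * x)) * J α n := by
    intro n
    have hgmeas : Measurable (Function.uncurry fun s t : ℝ =>
        if x < s + t then (1 : ℝ≥0∞) else 0) := by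
      exact Measurable.ite (measurableSet_lt measurable_const
        (measurable_fst.add measurable_snd)) measurable_const measurable_const
    have hgF : ∀ s : ℝ, s ≤ x → ∫⁻ t, (if x < s + t then (1 : ℝ≥0∞) else 0) ∂μ
        = ENNReal.ofReal (β/(β+α) * Real.exp (-α * x)) * ENNReal.ofReal (Real.exp (α * s)) := by
      intro s hs
      have hfe : (fun t : ℝ => if x < s + t then (1 : ℝ≥0∞) else 0)
          = (Ioi (x - s)).indicator (fun _ => 1) := by
        funext t
        by_cases h : x < s + t
        · rw [if_pos h, indicator_of_mem (mem_Ioi.mpr (by linarith))]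
        · rw [if_neg h, indicator_of_notMem
            (fun hc => h (by have := mem_Ioi.mp hc; linarith))]
      rw [hfe, lintegral_indicator measurableSet_Ioi, setLIntegral_one,
        htail0 (x - s) (by linarith)]
      rw [← ENNReal.ofReal_mul (by positivity)]
      congr 1
      rw [mul_assoc, ← Real.exp_add]
      congr 2
      ring
    have hcb := combo P X hmeas hindep μ hlaw x n _ hgmeas
      (fun s => ENNReal.ofReal (β/(β+α) * Real.exp (-α * x)) * ENNReal.ofReal (Real.exp (α * s)))
      (measurable_const.mul (hgm α)) hgF
    have hlhs : ∫⁻ ω, (A n).indicator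
        (fun ω => if x < S n ω + X n ω then (1 : ℝ≥0∞) else 0) ω ∂P = p n := by
      have hpt : ∀ ω, (A n).indicator
          (fun ω => if x < S n ω + X n ω then (1 : ℝ≥0∞) else 0) ω
          = (A n ∩ {ω | x < S (n+1) ω}).indicator 1 ω := by
        intro ω
        by_cases h : ω ∈ A n
        · by_cases h2 : x < S (n+1) ω
          · rw [indicator_of_mem h, indicator_of_mem (mem_inter h h2),
              if_pos (by rw [← hSsucc]; exact h2)]
            rfl
          · rw [indicator_of_mem h, indicator_of_notMem (fun hc => h2 hc.2),
              if_neg (by rw [← hSsucc]; exact h2)]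
        · rw [indicator_of_notMem h, indicator_of_notMem (fun hc => h hc.1)]
      rw [lintegral_congr hpt, lintegral_indicator_one
        ((hAmeas n).inter (measurableSet_lt measurable_const (hSmeas (n+1))))]
    have hrhs : ∫⁻ ω, (A n).indicator (fun ω =>
          ENNReal.ofReal (β/(β+α) * Real.exp (-α * x)) *
            ENNReal.ofReal (Real.exp (α * S n ω))) ω ∂P
        = ENNReal.ofReal (β/(β+α) * Real.exp (-α * x)) * J α n := by
      rw [lintegral_congr (g := fun ω => ENNReal.ofReal (β/(β+α) * Real.exp (-α * x)) *
          (A n).indicator (fun ω => ENNReal.ofReal (Real.exp (α * S n ω))) ω)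
        (fun ω => by by_cases h : ω ∈ A n <;> simp [h])]
      exact lintegral_const_mul _ (((hgm α).comp (hSmeas n)).indicator (hAmeas n))
    rw [← hlhs, ← hrhs]
    exact hcb
  -- b n in terms of J α n
  have hb_eq : ∀ n, b n = ENNReal.ofReal (α/(β+α) * Real.exp (-β * x)) * J α n := by
    intro n
    have hgmeas : Measurable (Function.uncurry fun s t : ℝ =>
        if x < s + t then ENNReal.ofReal (Real.exp (θ * s)) * ENNReal.ofReal (Real.exp (θ * t))
        else 0) := by
      exact Measurable.ite (measurableSet_lt measurable_const
        (measurable_fst.add measurable_snd))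
        (((hgm θ).comp measurable_fst).mul ((hgm θ).comp measurable_snd)) measurable_const
    have hgF : ∀ s : ℝ, s ≤ x → ∫⁻ t,
        (if x < s + t then ENNReal.ofReal (Real.exp (θ * s)) * ENNReal.ofReal (Real.exp (θ * t))
          else 0) ∂μ
        = ENNReal.ofReal (α/(β+α) * Real.exp (-β * x)) * ENNReal.ofReal (Real.exp (α * s)) := by
      intro s hs
      have hfe : (fun t : ℝ => if x < s + t then
            ENNReal.ofReal (Real.exp (θ * s)) * ENNReal.ofReal (Real.exp (θ * t)) else 0)
          = fun t => ENNReal.ofReal (Real.exp (θ * s)) *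
              (Ioi (x - s)).indicator (fun t => ENNReal.ofReal (Real.exp (θ * t))) t := by
        funext t
        by_cases h : x < s + t
        · rw [if_pos h, indicator_of_mem (mem_Ioi.mpr (by linarith))]
        · rw [if_neg h, indicator_of_notMem
            (fun hc => h (by have := mem_Ioi.mp hc; linarith)), mul_zero]
      rw [hfe, lintegral_const_mul _ (((hgm θ)).indicator measurableSet_Ioi),
        lintegral_indicator measurableSet_Ioi, htailθ (x - s) (by linarith)]
      rw [← ENNReal.ofReal_mul (Real.exp_nonneg _), ← ENNReal.ofReal_mul (by positivity)]
      congr 1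
      rw [mul_assoc, ← Real.exp_add, mul_comm (Real.exp (θ * s)) _, mul_assoc, ← Real.exp_add]
      congr 2
      rw [hθdef]
      ring
    have hcb := combo P X hmeas hindep μ hlaw x n _ hgmeas
      (fun s => ENNReal.ofReal (α/(β+α) * Real.exp (-β * x)) * ENNReal.ofReal (Real.exp (α * s)))
      (measurable_const.mul (hgm α)) hgF
    have hlhs : ∫⁻ ω, (A n).indicator (fun ω => if x < S n ω + X n ω then
          ENNReal.ofReal (Real.exp (θ * S n ω)) * ENNReal.ofReal (Real.exp (θ * X n ω))
          else 0) ω ∂P = b n := by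
      have hpt : ∀ ω, (A n).indicator (fun ω => if x < S n ω + X n ω then
            ENNReal.ofReal (Real.exp (θ * S n ω)) * ENNReal.ofReal (Real.exp (θ * X n ω))
            else 0) ω
          = (A n ∩ {ω | x < S (n+1) ω}).indicator
              (fun ω => ENNReal.ofReal (Real.exp (θ * S (n+1) ω))) ω := by
        intro ω
        by_cases h : ω ∈ A n
        · by_cases h2 : x < S (n+1) ω
          · rw [indicator_of_mem h, indicator_of_mem (mem_inter h h2),
              if_pos (by rw [← hSsucc]; exact h2)]
            rw [hSsucc n ω, ← ENNReal.ofReal_mul (Real.exp_nonneg _), ← Real.exp_add, mul_add]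
          · rw [indicator_of_mem h, indicator_of_notMem (fun hc => h2 hc.2),
              if_neg (by rw [← hSsucc]; exact h2)]
        · rw [indicator_of_notMem h, indicator_of_notMem (fun hc => h hc.1)]
      rw [lintegral_congr hpt]
    have hrhs : ∫⁻ ω, (A n).indicator (fun ω =>
          ENNReal.ofReal (α/(β+α) * Real.exp (-β * x)) *
            ENNReal.ofReal (Real.exp (α * S n ω))) ω ∂P
        = ENNReal.ofReal (α/(β+α) * Real.exp (-β * x)) * J α n := by
      rw [lintegral_congr (g := fun ω => ENNReal.ofReal (α/(β+α) * Real.exp (-β * x)) *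
          (A n).indicator (fun ω => ENNReal.ofReal (Real.exp (α * S n ω))) ω)
        (fun ω => by by_cases h : ω ∈ A n <;> simp [h])]
      exact lintegral_const_mul _ (((hgm α).comp (hSmeas n)).indicator (hAmeas n))
    rw [← hlhs, ← hrhs]
    exact hcb
  have hKrel : ∀ n, b n = ENNReal.ofReal (α/β * Real.exp (θ * x)) * p n := by
    intro n
    rw [hb_eq n, hp_eq n, ← mul_assoc]
    congr 1
    rw [← ENNReal.ofReal_mul (by positivity)]
    congr 1
    rw [mul_mul_mul_comm, ← Real.exp_add]
    have h1 : θ * x + -α * x = -β * x := by rw [hθdef]; ring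
    have h2 : α / β * (β / (β + α)) = α / (β + α) := by field_simp
    rw [h1, h2]
  -- splitting identity
  have hApart : ∀ n, A (n+1) = A n ∩ {ω | S (n+1) ω ≤ x} := by
    intro n
    ext ω
    simp only [hAdef, mem_setOf_eq, mem_inter_iff]
    constructor
    · intro h
      exact ⟨fun k hk => h k (le_trans hk (Nat.le_succ n)), h (n+1) le_rfl⟩
    · rintro ⟨h1, h2⟩ k hk
      rcases Nat.lt_succ_iff_lt_or_eq.mp (Nat.lt_succ_of_le hk) with h | h
      · exact h1 k (Nat.lt_succ_iff.mp h)
      · rw [h]; exact h2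
  have hsplit : ∀ n, J θ n = J θ (n+1) + b n := by
    intro n
    have h1 := hstep θ 1 hM1 n
    rw [mul_one] at h1
    rw [← h1]
    have hpt : ∀ ω, (A n).indicator
        (fun ω => ENNReal.ofReal (Real.exp (θ * S (n+1) ω))) ω
        = (A (n+1)).indicator (fun ω => ENNReal.ofReal (Real.exp (θ * S (n+1) ω))) ω
          + (A n ∩ {ω | x < S (n+1) ω}).indicator
              (fun ω => ENNReal.ofReal (Real.exp (θ * S (n+1) ω))) ω := by
      intro ω
      by_cases h : ω ∈ A n
      · by_cases h2 : S (n+1) ω ≤ x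
        · rw [indicator_of_mem h, indicator_of_mem (by rw [hApart]; exact mem_inter h h2),
            indicator_of_notMem (fun hc => (not_lt.mpr h2) hc.2), add_zero]
        · rw [indicator_of_mem h,
            indicator_of_notMem (fun hc => h2 ((hApart n ▸ hc).2)),
            indicator_of_mem (mem_inter h (show ω ∈ {ω | x < S (n+1) ω} from not_le.mp h2)), zero_add]
      · rw [indicator_of_notMem h,
          indicator_of_notMem (fun hc => h ((hApart n ▸ hc).1)),
          indicator_of_notMem (fun hc => h hc.1), add_zero]
    have hind1 : Measurable ((A (n+1)).indicator
        fun ω => ENNReal.ofReal (Real.exp (θ * S (n+1) ω))) :=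
      Measurable.indicator ((hgm θ).comp (hSmeas (n+1))) (hAmeas (n+1))
    rw [lintegral_congr hpt, lintegral_add_left hind1]
  -- geometric decay
  have hmono : ∀ n, J (θ/2) (n+1) ≤ J (θ/2) n * ENNReal.ofReal v := by
    intro n
    rw [← hstep (θ/2) (ENNReal.ofReal v) hMv n]
    apply lintegral_mono
    intro ω
    exact indicator_le_indicator_of_subset
      (by rw [hApart]; exact inter_subset_left) (fun _ => zero_le) ω
  have hpow : ∀ n, J (θ/2) n ≤ (ENNReal.ofReal v)^n := by
    intro n
    induction n with
    | zero => rw [hJ0, pow_zero]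
    | succ n ih =>
      calc J (θ/2) (n+1) ≤ J (θ/2) n * ENNReal.ofReal v := hmono n
        _ ≤ (ENNReal.ofReal v)^n * ENNReal.ofReal v := mul_le_mul_left ih _
        _ = (ENNReal.ofReal v)^(n+1) := (pow_succ _ _).symm
  have haJ : ∀ n, J θ n ≤ ENNReal.ofReal (Real.exp (θ/2 * x)) * J (θ/2) n := by
    intro n
    rw [show ENNReal.ofReal (Real.exp (θ/2 * x)) * J (θ/2) n
        = ∫⁻ ω, ENNReal.ofReal (Real.exp (θ/2 * x)) *
          (A n).indicator (fun ω => ENNReal.ofReal (Real.exp (θ/2 * S n ω))) ω ∂P from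
      (lintegral_const_mul _ (((hgm (θ/2)).comp (hSmeas n)).indicator (hAmeas n))).symm]
    apply lintegral_mono
    intro ω
    simp only [Set.indicator_apply]
    split_ifs with h
    · rw [← ENNReal.ofReal_mul (Real.exp_nonneg _), ← Real.exp_add]
      apply ENNReal.ofReal_le_ofReal
      apply Real.exp_le_exp.mpr
      have hSx : S n ω ≤ x := h n le_rfl
      nlinarith [hθ]
    · simp
  have haTend : Filter.Tendsto (J θ) Filter.atTop (nhds 0) := by
    have h1 : Filter.Tendsto (fun n => (ENNReal.ofReal v)^n) Filter.atTop (nhds 0) :=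
      ENNReal.tendsto_pow_atTop_nhds_zero_of_lt_one (ENNReal.ofReal_lt_one.mpr hv1)
    have h2 : Filter.Tendsto (fun n => ENNReal.ofReal (Real.exp (θ/2 * x)) *
        (ENNReal.ofReal v)^n) Filter.atTop (nhds 0) := by
      have := ENNReal.Tendsto.const_mul h1
        (Or.inr (ENNReal.ofReal_ne_top : ENNReal.ofReal (Real.exp (θ/2 * x)) ≠ ⊤))
      simpa using this
    apply tendsto_of_tendsto_of_tendsto_of_le_of_le tendsto_const_nhds h2
      (fun n => zero_le)
    intro n
    exact le_trans (haJ n) (mul_le_mul_right (hpow n) _)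
  -- telescoping
  have htel : ∀ n, J θ n + ∑ k ∈ Finset.range n, b k = 1 := by
    intro n
    induction n with
    | zero => simp [hJ0]
    | succ n ih =>
      rw [Finset.sum_range_succ, show J θ (n+1) + (∑ k ∈ Finset.range n, b k + b n)
          = (J θ (n+1) + b n) + ∑ k ∈ Finset.range n, b k by ring, ← hsplit n, ih]
  have hsumb : ∑' n, b n = 1 := by
    have hpart := ENNReal.tendsto_nat_tsum b
    have hadd := Filter.Tendsto.add haTend hpart
    rw [zero_add] at hadd
    have hconst : Filter.Tendsto (fun n : ℕ => (1 : ℝ≥0∞)) Filter.atTop (nhds (∑' n, b n)) :=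
      hadd.congr htel
    exact tendsto_nhds_unique hconst tendsto_const_nhds
  -- sum of p
  set K : ℝ≥0∞ := ENNReal.ofReal (α/β * Real.exp (θ * x)) with hKdef
  have hK0 : K ≠ 0 := by
    rw [hKdef]
    simp only [ne_eq, ENNReal.ofReal_eq_zero, not_le]
    positivity
  have hKtop : K ≠ ⊤ := ENNReal.ofReal_ne_top
  have hsump : ∑' n, p n = ENNReal.ofReal (β/α * Real.exp (-θ * x)) := by
    have h1 : K * ∑' n, p n = 1 := by
      rw [← ENNReal.tsum_mul_left, ← hsumb]
      exact tsum_congr (fun n => (hKrel n).symm)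
    have h2 : ∑' n, p n = K⁻¹ := by
      rw [← one_mul (∑' n, p n), ← ENNReal.inv_mul_cancel hK0 hKtop, mul_assoc, h1, mul_one]
    rw [h2, hKdef, ← ENNReal.ofReal_inv_of_pos (by positivity)]
    congr 1
    rw [mul_inv, inv_div, show -θ * x = -(θ * x) by ring, Real.exp_neg]
  -- the event and its complement
  have hEmeas : MeasurableSet {ω | ∀ n : ℕ, S n ω ≤ x} := by
    have : {ω | ∀ n : ℕ, S n ω ≤ x} = ⋂ n, {ω | S n ω ≤ x} := by
      ext ω; simp
    rw [this]
    exact MeasurableSet.iInter (fun n => measurableSet_le (hSmeas n) measurable_const)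
  have hcompl : {ω | ∀ n : ℕ, S n ω ≤ x}ᶜ = ⋃ n, (A n ∩ {ω | x < S (n+1) ω}) := by
    ext ω
    simp only [mem_compl_iff, mem_setOf_eq, not_forall, not_le, mem_iUnion, mem_inter_iff]
    constructor
    · rintro ⟨m, hm⟩
      have hex : ∃ m, x < S m ω := ⟨m, hm⟩
      have hn : x < S (Nat.find hex) ω := Nat.find_spec hex
      have hmin : ∀ k, k < Nat.find hex → ¬ x < S k ω := fun k hk => Nat.find_min hex hk
      have hn0 : Nat.find hex ≠ 0 := by
        intro h
        rw [h, hS0] at hn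
        linarith
      obtain ⟨n', hn'⟩ := Nat.exists_eq_succ_of_ne_zero hn0
      have hfind : Nat.find hex = n' + 1 := hn'
      refine ⟨n', ⟨fun k hk => not_lt.mp (hmin k (by omega)), by rw [← hfind]; exact hn⟩⟩
    · rintro ⟨n, _, h2⟩
      exact ⟨n+1, h2⟩
  have hDmeas : ∀ n, MeasurableSet (A n ∩ {ω | x < S (n+1) ω}) :=
    fun n => (hAmeas n).inter (measurableSet_lt measurable_const (hSmeas (n+1)))
  have hdisj : Pairwise (Function.onFun Disjoint
      (fun n => A n ∩ {ω | x < S (n+1) ω})) := by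
    have key : ∀ m n, m < n → Disjoint (A m ∩ {ω | x < S (m+1) ω})
        (A n ∩ {ω | x < S (n+1) ω}) := by
      intro m n hmn
      rw [Set.disjoint_left]
      rintro ω ⟨_, h2⟩ ⟨h3, _⟩
      exact absurd h2 (not_lt.mpr (h3 (m+1) (by omega)))
    intro m n hmn
    rcases hmn.lt_or_gt with h | h
    · exact key m n h
    · exact (key n m h).symm
  have hPcompl : P ({ω | ∀ n : ℕ, S n ω ≤ x}ᶜ) = ∑' n, p n := by
    rw [hcompl, measure_iUnion hdisj hDmeas]
  have hle1 : ENNReal.ofReal (β/α * Real.exp (-θ * x)) ≤ 1 := by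
    rw [show (1 : ℝ≥0∞) = ENNReal.ofReal 1 by simp]
    apply ENNReal.ofReal_le_ofReal
    have h1 : β / α ≤ 1 := by
      rw [div_le_one hα]
      linarith
    have h2 : Real.exp (-θ * x) ≤ 1 := by
      rw [Real.exp_le_one_iff]
      nlinarith [hθ]
    nlinarith [Real.exp_nonneg (-θ * x), div_nonneg hβ.le hα.le]
  have hPE : P {ω | ∀ n : ℕ, S n ω ≤ x}
      = 1 - ENNReal.ofReal (β/α * Real.exp (-θ * x)) := by
    have h1 : P ({ω | ∀ n : ℕ, S n ω ≤ x}ᶜ)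
        = 1 - P {ω | ∀ n : ℕ, S n ω ≤ x} := by
      rw [measure_compl hEmeas (measure_ne_top P _), measure_univ]
    rw [← ENNReal.sub_sub_cancel ENNReal.one_ne_top
      (prob_le_one (μ := P) (s := {ω | ∀ n : ℕ, S n ω ≤ x})), ← h1, hPcompl, hsump]
  rw [hPE, ENNReal.toReal_sub_of_le hle1 ENNReal.one_ne_top, ENNReal.toReal_one,
    ENNReal.toReal_ofReal (by positivity)]
end

section
/- Let $X$ be a random variable with MGF $M$ finite on a neighborhood of $0$, with $\mathbb{E}[X] = \mu \le 0$, $\mathbb{E}[X^2] = \mu_2 \ge \sigma_*^2 > 0$, and $|M^{(3)}(\theta)| \le C_M$ on the relevant interval. Let $\theta_0 \in [0, 2\sigma_*^{-2}|\mu|]$ satisfy $M'(\theta_0) = 0$, and set $c_m = 2\sigma_*^{-2}$. If $\frac{2}{3}c_m|\mu| \le 1$, $c_m\mu^2 + C_M c_m^3|\mu|^3 \le \frac{1}{2}$, and $C_M c_m^3 |\mu| \le 1$, then $\big(M(2\theta_0)/M(\theta_0)^2\big)^{\mu^{-2}/2} \le e^{2C_M c_m^2 + 4 c_m}$. -/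
open MeasureTheory ProbabilityTheory Real Set

set_option linter.unusedSectionVars false
set_option maxHeartbeats 1000000

section TiltedAux

variable {Ω : Type*} [MeasurableSpace Ω] (P : Measure Ω) [IsProbabilityMeasure P]
  (X : Ω → ℝ) {a : ℝ}

lemma exp_add_abs_le (θ ε x : ℝ) :
    Real.exp (ε * |x| + θ * x) ≤ Real.exp ((θ + ε) * x) + Real.exp ((θ - ε) * x) := by
  rcases le_or_gt 0 x with h | h
  · rw [abs_of_nonneg h, show ε * x + θ * x = (θ + ε) * x by ring]
    linarith [(Real.exp_pos ((θ - ε) * x)).le]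
  · rw [abs_of_neg h, show ε * -x + θ * x = (θ - ε) * x by ring]
    linarith [(Real.exp_pos ((θ + ε) * x)).le]

lemma mom_integrable (hX : Measurable X)
    (hfin : ∀ θ ∈ Set.Ioo (-a) a, Integrable (fun ω => Real.exp (θ * X ω)) P)
    (n : ℕ) {θ : ℝ} (hθ : θ ∈ Set.Ioo (-a) a) :
    Integrable (fun ω => X ω ^ n * Real.exp (θ * X ω)) P := by
  obtain ⟨h1, h2⟩ := hθ
  set ε : ℝ := min (a - θ) (θ + a) / 2 with hεdef
  have hmin1 : min (a - θ) (θ + a) ≤ a - θ := min_le_left _ _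
  have hmin2 : min (a - θ) (θ + a) ≤ θ + a := min_le_right _ _
  have hε0 : 0 < ε := div_pos (lt_min (by linarith) (by linarith)) two_pos
  have hp : θ + ε ∈ Set.Ioo (-a) a := ⟨by linarith, by rw [hεdef]; linarith⟩
  have hm : θ - ε ∈ Set.Ioo (-a) a := ⟨by rw [hεdef]; linarith, by linarith⟩
  have hint := ((hfin _ hp).add (hfin _ hm)).const_mul ((n.factorial : ℝ) / ε ^ n)
  refine hint.mono' ?_ ?_
  · exact ((hX.pow_const n).mul ((hX.const_mul θ).exp)).aestronglyMeasurable
  · filter_upwards with ω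
    set x := X ω with hx
    have hkey : |x| ^ n ≤ (n.factorial : ℝ) / ε ^ n * Real.exp (ε * |x|) := by
      have hεx : 0 ≤ ε * |x| := mul_nonneg hε0.le (abs_nonneg x)
      have hterm : (ε * |x|) ^ n / n.factorial ≤ Real.exp (ε * |x|) := by
        refine le_trans ?_ (Real.sum_le_exp_of_nonneg hεx (n + 1))
        exact Finset.single_le_sum (f := fun i => (ε * |x|) ^ i / i.factorial)
          (fun i _ => by positivity) (Finset.self_mem_range_succ n)
      rw [div_le_iff₀ (by positivity : (0:ℝ) < (n.factorial : ℝ))] at hterm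
      rw [div_mul_eq_mul_div, le_div_iff₀ (by positivity : (0:ℝ) < ε ^ n)]
      calc |x| ^ n * ε ^ n = (ε * |x|) ^ n := by rw [mul_pow]; ring
        _ ≤ Real.exp (ε * |x|) * (n.factorial : ℝ) := hterm
        _ = (n.factorial : ℝ) * Real.exp (ε * |x|) := by ring
    calc ‖x ^ n * Real.exp (θ * x)‖ = |x| ^ n * Real.exp (θ * x) := by
          rw [norm_mul, norm_pow, Real.norm_eq_abs, Real.norm_eq_abs,
            abs_of_pos (Real.exp_pos _)]
      _ ≤ ((n.factorial : ℝ) / ε ^ n * Real.exp (ε * |x|)) * Real.exp (θ * x) := by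
          exact mul_le_mul_of_nonneg_right hkey (Real.exp_pos _).le
      _ = (n.factorial : ℝ) / ε ^ n * Real.exp (ε * |x| + θ * x) := by
          rw [mul_assoc, ← Real.exp_add]
      _ ≤ (n.factorial : ℝ) / ε ^ n *
            (Real.exp ((θ + ε) * x) + Real.exp ((θ - ε) * x)) := by
          refine mul_le_mul_of_nonneg_left (exp_add_abs_le θ ε x) (by positivity)

lemma mom_hasDerivAt (hX : Measurable X)
    (hfin : ∀ θ ∈ Set.Ioo (-a) a, Integrable (fun ω => Real.exp (θ * X ω)) P)
    (n : ℕ) {θ : ℝ} (hθ : θ ∈ Set.Ioo (-a) a) :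
    HasDerivAt (fun t => ∫ ω, X ω ^ n * Real.exp (t * X ω) ∂P)
      (∫ ω, X ω ^ (n + 1) * Real.exp (θ * X ω) ∂P) θ := by
  obtain ⟨h1, h2⟩ := hθ
  set ε : ℝ := min (a - θ) (θ + a) / 2 with hεdef
  have hmin1 : min (a - θ) (θ + a) ≤ a - θ := min_le_left _ _
  have hmin2 : min (a - θ) (θ + a) ≤ θ + a := min_le_right _ _
  have hε0 : 0 < ε := div_pos (lt_min (by linarith) (by linarith)) two_pos
  have hp : θ + ε ∈ Set.Ioo (-a) a := ⟨by linarith, by rw [hεdef]; linarith⟩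
  have hm : θ - ε ∈ Set.Ioo (-a) a := ⟨by rw [hεdef]; linarith, by linarith⟩
  have hboundint : Integrable (fun ω => |X ω| ^ (n + 1) *
      (Real.exp ((θ + ε) * X ω) + Real.exp ((θ - ε) * X ω))) P := by
    have habs : ∀ (β : ℝ), β ∈ Set.Ioo (-a) a →
        Integrable (fun ω => |X ω| ^ (n + 1) * Real.exp (β * X ω)) P := by
      intro β hβ
      have := (mom_integrable P X hX hfin (n + 1) hβ).abs
      refine this.congr ?_
      filter_upwards with ω
      rw [abs_mul, abs_pow, abs_of_pos (Real.exp_pos _)]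
    have := (habs _ hp).add (habs _ hm)
    refine this.congr ?_
    filter_upwards with ω
    simp only [Pi.add_apply]
    ring
  have key := hasDerivAt_integral_of_dominated_loc_of_deriv_le (μ := P)
    (F := fun t ω => X ω ^ n * Real.exp (t * X ω))
    (F' := fun t ω => X ω ^ (n + 1) * Real.exp (t * X ω))
    (x₀ := θ)
    (bound := fun ω => |X ω| ^ (n + 1) *
      (Real.exp ((θ + ε) * X ω) + Real.exp ((θ - ε) * X ω)))
    (Metric.ball_mem_nhds θ hε0)
    (Filter.Eventually.of_forall fun t =>
      ((hX.pow_const n).mul ((hX.const_mul t).exp)).aestronglyMeasurable)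
    (mom_integrable P X hX hfin n ⟨h1, h2⟩)
    (((hX.pow_const (n + 1)).mul ((hX.const_mul θ).exp)).aestronglyMeasurable)
    ?_ hboundint ?_
  · exact key.2
  · filter_upwards with ω
    intro t ht
    rw [Metric.mem_ball, Real.dist_eq, abs_sub_lt_iff] at ht
    set x := X ω
    have hexp : Real.exp (t * x) ≤ Real.exp ((θ + ε) * x) + Real.exp ((θ - ε) * x) := by
      rcases le_or_gt 0 x with h | h
      · have : t * x ≤ (θ + ε) * x := by nlinarith [ht.1, ht.2]
        exact le_trans (Real.exp_le_exp.mpr this) (by linarith [(Real.exp_pos ((θ - ε) * x)).le])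
      · have : t * x ≤ (θ - ε) * x := by nlinarith [ht.1, ht.2]
        exact le_trans (Real.exp_le_exp.mpr this) (by linarith [(Real.exp_pos ((θ + ε) * x)).le])
    calc ‖x ^ (n + 1) * Real.exp (t * x)‖ = |x| ^ (n + 1) * Real.exp (t * x) := by
          rw [norm_mul, norm_pow, Real.norm_eq_abs, Real.norm_eq_abs,
            abs_of_pos (Real.exp_pos _)]
      _ ≤ |x| ^ (n + 1) * (Real.exp ((θ + ε) * x) + Real.exp ((θ - ε) * x)) := by
          exact mul_le_mul_of_nonneg_left hexp (by positivity)
  · filter_upwards with ω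
    intro t _
    set x := X ω
    have h1' : HasDerivAt (fun s => s * x) x t := hasDerivAt_mul_const x
    have h2' : HasDerivAt (fun s => Real.exp (s * x)) (Real.exp (t * x) * x) t := h1'.exp
    have h3' := h2'.const_mul (x ^ n)
    refine h3'.congr_deriv ?_
    rw [pow_succ]
    ring

lemma mom_iteratedDerivWithin (hX : Measurable X)
    (hfin : ∀ θ ∈ Set.Ioo (-a) a, Integrable (fun ω => Real.exp (θ * X ω)) P)
    {b : ℝ} (hb : 0 < b) (hsub : Set.Icc 0 b ⊆ Set.Ioo (-a) a) (k n : ℕ) :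
    Set.EqOn (iteratedDerivWithin k (fun t => ∫ ω, X ω ^ n * Real.exp (t * X ω) ∂P) (Set.Icc 0 b))
      (fun t => ∫ ω, X ω ^ (n + k) * Real.exp (t * X ω) ∂P) (Set.Icc 0 b) := by
  induction k generalizing n with
  | zero => simp [iteratedDerivWithin_zero]; intro y hy; rfl
  | succ k ih =>
    intro y hy
    have hud := (uniqueDiffOn_Icc hb) y hy
    rw [iteratedDerivWithin_succ, derivWithin_congr (ih n) (ih n hy),
      ((mom_hasDerivAt P X hX hfin (n + k) (hsub hy)).hasDerivWithinAt).derivWithin hud]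
    show (∫ ω, X ω ^ (n + k + 1) * Real.exp (y * X ω) ∂P) = _
    rw [Nat.add_assoc]

lemma mom_iteratedDeriv (hX : Measurable X)
    (hfin : ∀ θ ∈ Set.Ioo (-a) a, Integrable (fun ω => Real.exp (θ * X ω)) P)
    (k n : ℕ) {θ : ℝ} (hθ : θ ∈ Set.Ioo (-a) a) :
    iteratedDeriv k (fun t => ∫ ω, X ω ^ n * Real.exp (t * X ω) ∂P) θ
      = ∫ ω, X ω ^ (n + k) * Real.exp (θ * X ω) ∂P := by
  induction k generalizing n θ with
  | zero => rfl
  | succ k ih =>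
    rw [iteratedDeriv_succ]
    have hev : iteratedDeriv k (fun t => ∫ ω, X ω ^ n * Real.exp (t * X ω) ∂P)
        =ᶠ[nhds θ] (fun t => ∫ ω, X ω ^ (n + k) * Real.exp (t * X ω) ∂P) := by
      filter_upwards [isOpen_Ioo.mem_nhds hθ] with y hy
      exact ih n hy
    rw [hev.deriv_eq, (mom_hasDerivAt P X hX hfin (n + k) hθ).deriv, Nat.add_assoc]

lemma mom_contDiffOn (hX : Measurable X)
    (hfin : ∀ θ ∈ Set.Ioo (-a) a, Integrable (fun ω => Real.exp (θ * X ω)) P)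
    {b : ℝ} (hb : 0 < b) (hsub : Set.Icc 0 b ⊆ Set.Ioo (-a) a) (N n : ℕ) :
    ContDiffOn ℝ N (fun t => ∫ ω, X ω ^ n * Real.exp (t * X ω) ∂P) (Set.Icc 0 b) := by
  have h : ∀ m : ℕ, DifferentiableOn ℝ
      (iteratedDerivWithin m (fun t => ∫ ω, X ω ^ n * Real.exp (t * X ω) ∂P) (Set.Icc 0 b))
      (Set.Icc 0 b) := by
    intro m
    refine DifferentiableOn.congr (f := fun t => ∫ ω, X ω ^ (n + m) * Real.exp (t * X ω) ∂P)
      ?_ (mom_iteratedDerivWithin P X hX hfin hb hsub m n)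
    exact fun y hy =>
      ((mom_hasDerivAt P X hX hfin (n + m) (hsub hy)).differentiableAt).differentiableWithinAt
  exact contDiffOn_of_differentiableOn_deriv (fun m _ => h m)

lemma mom_diffOn_iter (hX : Measurable X)
    (hfin : ∀ θ ∈ Set.Ioo (-a) a, Integrable (fun ω => Real.exp (θ * X ω)) P)
    {b : ℝ} (hb : 0 < b) (hsub : Set.Icc 0 b ⊆ Set.Ioo (-a) a) (k n : ℕ) :
    DifferentiableOn ℝ
      (iteratedDerivWithin k (fun t => ∫ ω, X ω ^ n * Real.exp (t * X ω) ∂P) (Set.Icc 0 b))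
      (Set.Ioo 0 b) := by
  refine DifferentiableOn.congr (f := fun t => ∫ ω, X ω ^ (n + k) * Real.exp (t * X ω) ∂P)
    ?_ (fun y hy => mom_iteratedDerivWithin P X hX hfin hb hsub k n (Ioo_subset_Icc_self hy))
  exact fun y hy => ((mom_hasDerivAt P X hX hfin (n + k)
    (hsub (Ioo_subset_Icc_self hy))).differentiableAt).differentiableWithinAt

lemma mom_taylor_two (hX : Measurable X)
    (hfin : ∀ θ ∈ Set.Ioo (-a) a, Integrable (fun ω => Real.exp (θ * X ω)) P)
    {b : ℝ} (hb : 0 < b) (hsub : Set.Icc 0 b ⊆ Set.Ioo (-a) a) (n : ℕ) :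
    ∃ x' ∈ Set.Ioo 0 b, (∫ ω, X ω ^ n * Real.exp (b * X ω) ∂P)
      = (∫ ω, X ω ^ n * Real.exp (0 * X ω) ∂P)
        + (∫ ω, X ω ^ (n + 1) * Real.exp (0 * X ω) ∂P) * b
        + (∫ ω, X ω ^ (n + 2) * Real.exp (0 * X ω) ∂P) * b ^ 2 / 2
        + (∫ ω, X ω ^ (n + 3) * Real.exp (x' * X ω) ∂P) * b ^ 3 / 6 := by
  obtain ⟨x', hx', heq⟩ := taylor_mean_remainder_lagrange (f := fun t => ∫ ω, X ω ^ n * Real.exp (t * X ω) ∂P)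
    (x₀ := 0) (x := b) (n := 2) hb.ne
    (by rw [Set.uIcc_of_le hb.le]; exact (mom_contDiffOn P X hX hfin hb hsub 2 n))
    (by rw [Set.uIcc_of_le hb.le, Set.uIoo_of_le hb.le]; exact (mom_diffOn_iter P X hX hfin hb hsub 2 n))
  rw [Set.uIoo_of_le hb.le] at hx'
  rw [Set.uIcc_of_le hb.le] at heq
  refine ⟨x', hx', ?_⟩
  have h0 : (0 : ℝ) ∈ Set.Icc (0:ℝ) b := ⟨le_refl _, hb.le⟩
  have htay : taylorWithinEval (fun t => ∫ ω, X ω ^ n * Real.exp (t * X ω) ∂P) 2 (Set.Icc 0 b) 0 b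
      = (∫ ω, X ω ^ n * Real.exp (0 * X ω) ∂P)
        + (∫ ω, X ω ^ (n + 1) * Real.exp (0 * X ω) ∂P) * b
        + (∫ ω, X ω ^ (n + 2) * Real.exp (0 * X ω) ∂P) * b ^ 2 / 2 := by
    rw [taylor_within_apply]
    rw [Finset.sum_range_succ, Finset.sum_range_succ, Finset.sum_range_succ, Finset.sum_range_zero]
    rw [mom_iteratedDerivWithin P X hX hfin hb hsub 0 n h0,
      mom_iteratedDerivWithin P X hX hfin hb hsub 1 n h0,
      mom_iteratedDerivWithin P X hX hfin hb hsub 2 n h0]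
    simp [smul_eq_mul]
    ring
  rw [htay] at heq
  rw [mom_iteratedDerivWithin P X hX hfin hb hsub 3 n (Ioo_subset_Icc_self hx')] at heq
  have : ((2 : ℕ) + 1).factorial = 6 := rfl
  rw [this] at heq
  push_cast at heq
  linarith [heq]

lemma mom_taylor_one (hX : Measurable X)
    (hfin : ∀ θ ∈ Set.Ioo (-a) a, Integrable (fun ω => Real.exp (θ * X ω)) P)
    {b : ℝ} (hb : 0 < b) (hsub : Set.Icc 0 b ⊆ Set.Ioo (-a) a) (n : ℕ) :
    ∃ x' ∈ Set.Ioo 0 b, (∫ ω, X ω ^ n * Real.exp (b * X ω) ∂P)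
      = (∫ ω, X ω ^ n * Real.exp (0 * X ω) ∂P)
        + (∫ ω, X ω ^ (n + 1) * Real.exp (0 * X ω) ∂P) * b
        + (∫ ω, X ω ^ (n + 2) * Real.exp (x' * X ω) ∂P) * b ^ 2 / 2 := by
  obtain ⟨x', hx', heq⟩ := taylor_mean_remainder_lagrange (f := fun t => ∫ ω, X ω ^ n * Real.exp (t * X ω) ∂P)
    (x₀ := 0) (x := b) (n := 1) hb.ne
    (by rw [Set.uIcc_of_le hb.le]; exact (mom_contDiffOn P X hX hfin hb hsub 1 n))
    (by rw [Set.uIcc_of_le hb.le, Set.uIoo_of_le hb.le]; exact (mom_diffOn_iter P X hX hfin hb hsub 1 n))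
  rw [Set.uIoo_of_le hb.le] at hx'
  rw [Set.uIcc_of_le hb.le] at heq
  refine ⟨x', hx', ?_⟩
  have h0 : (0 : ℝ) ∈ Set.Icc (0:ℝ) b := ⟨le_refl _, hb.le⟩
  have htay : taylorWithinEval (fun t => ∫ ω, X ω ^ n * Real.exp (t * X ω) ∂P) 1 (Set.Icc 0 b) 0 b
      = (∫ ω, X ω ^ n * Real.exp (0 * X ω) ∂P)
        + (∫ ω, X ω ^ (n + 1) * Real.exp (0 * X ω) ∂P) * b := by
    rw [taylor_within_apply]
    rw [Finset.sum_range_succ, Finset.sum_range_succ, Finset.sum_range_zero]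
    rw [mom_iteratedDerivWithin P X hX hfin hb hsub 0 n h0,
      mom_iteratedDerivWithin P X hX hfin hb hsub 1 n h0]
    simp [smul_eq_mul]
    ring
  rw [htay] at heq
  rw [mom_iteratedDerivWithin P X hX hfin hb hsub 2 n (Ioo_subset_Icc_self hx')] at heq
  have : ((1 : ℕ) + 1).factorial = 2 := rfl
  rw [this] at heq
  push_cast at heq
  linarith [heq]


end TiltedAux

theorem tilted_second_moment_ratio_bound {Ω : Type*} [MeasurableSpace Ω] (P : Measure Ω)
    [IsProbabilityMeasure P] (X : Ω → ℝ) (hX : Measurable X)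
    (a : ℝ) (ha : 0 < a)
    (hfin : ∀ θ ∈ Set.Ioo (-a) a, Integrable (fun ω => Real.exp (θ * X ω)) P)
    (μ μ2 σs2 CM θ0 cm : ℝ)
    (hμ : μ = ∫ ω, X ω ∂P) (hμ0 : μ ≤ 0)
    (hμ2 : μ2 = ∫ ω, X ω ^ 2 ∂P) (hσs : 0 < σs2) (hμ2lb : σs2 ≤ μ2)
    (hcm : cm = 2 * σs2⁻¹)
    (hθ0mem : θ0 ∈ Set.Icc 0 (cm * |μ|)) (h2θ0 : 2 * θ0 < a)
    (hcrit : deriv (mgf X P) θ0 = 0)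
    (hM3 : ∀ θ ∈ Set.Icc 0 (2 * θ0), |iteratedDeriv 3 (mgf X P) θ| ≤ CM)
    (hc1 : 2 / 3 * cm * |μ| ≤ 1)
    (hc2 : cm * μ ^ 2 + CM * cm ^ 3 * |μ| ^ 3 ≤ 1 / 2)
    (hc3 : CM * cm ^ 3 * |μ| ≤ 1) :
    (mgf X P (2 * θ0) / (mgf X P θ0) ^ 2) ^ ((μ ^ 2)⁻¹ / 2)
      ≤ Real.exp (2 * CM * cm ^ 2 + 4 * cm) := by
  obtain ⟨hT0, hTle⟩ := hθ0mem
  have hcm0 : 0 < cm := by rw [hcm]; positivity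
  have hCM0 : 0 ≤ CM := le_trans (abs_nonneg _) (hM3 0 ⟨le_refl 0, by linarith⟩)
  have hRHS0 : 0 ≤ 2 * CM * cm ^ 2 + 4 * cm := by positivity
  have hp0 : 0 ≤ (μ ^ 2)⁻¹ / 2 := by positivity
  rcases eq_or_lt_of_le hT0 with h0 | hTpos
  · -- θ0 = 0
    subst h0
    norm_num [ProbabilityTheory.mgf_zero]
    linarith only [hRHS0]
  -- now 0 < θ0
  obtain ⟨M, hMdef⟩ : ∃ M : ℕ → ℝ → ℝ, M = fun n t => ∫ ω, X ω ^ n * Real.exp (t * X ω) ∂P :=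
    ⟨_, rfl⟩
  have hmgf : ∀ s : ℝ, mgf X P s = M 0 s := by
    intro s; rw [hMdef]; simp [ProbabilityTheory.mgf]
  have hfun : mgf X P = M 0 := funext hmgf
  have habs0 : 0 < |μ| := by
    by_contra h
    push_neg at h
    have : |μ| = 0 := le_antisymm h (abs_nonneg μ)
    rw [this, mul_zero] at hTle
    linarith
  have hμ2pos : 0 < μ ^ 2 := by rw [← sq_abs]; positivity
  have hμeq : μ = -|μ| := by rw [abs_of_nonpos hμ0]; ring
  have hsub2 : Set.Icc 0 (2 * θ0) ⊆ Set.Ioo (-a) a := by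
    intro y hy; exact ⟨by linarith [hy.1], by linarith [hy.2]⟩
  have hsub1 : Set.Icc 0 θ0 ⊆ Set.Ioo (-a) a := by
    intro y hy; exact ⟨by linarith [hy.1], by linarith [hy.2]⟩
  have hb2 : 0 < 2 * θ0 := by linarith
  have hθIoo : θ0 ∈ Set.Ioo (-a) a := ⟨by linarith, by linarith⟩
  -- base values
  have hM00 : M 0 0 = 1 := by simp only [hMdef]; simp
  have hM10 : M 1 0 = μ := by simp only [hMdef]; simp [hμ.symm]
  have hM20 : M 2 0 = μ2 := by simp only [hMdef]; simp [hμ2.symm]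
  -- critical point
  have hd : deriv (M 0) θ0 = M 1 θ0 := by
    simp only [hMdef]
    exact (mom_hasDerivAt P X hX hfin 0 hθIoo).deriv
  rw [hfun, hd] at hcrit
  -- third derivative bound
  have hM3' : ∀ θ ∈ Set.Icc 0 (2 * θ0), |M 3 θ| ≤ CM := by
    intro θ hθ
    have h := hM3 θ hθ
    rw [hfun] at h
    have hiter : iteratedDeriv 3 (M 0) θ = M 3 θ := by
      simp only [hMdef]
      exact mom_iteratedDeriv P X hX hfin 3 0 (hsub2 hθ)
    rwa [hiter] at h
  -- Taylor expansions
  obtain ⟨ξ1, hξ1, he1⟩ := mom_taylor_two P X hX hfin hb2 hsub2 0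
  obtain ⟨ξ2, hξ2, he2⟩ := mom_taylor_two P X hX hfin hTpos hsub1 0
  obtain ⟨ξ3, hξ3, he3⟩ := mom_taylor_one P X hX hfin hTpos hsub1 1
  have he1' : M 0 (2 * θ0) = M 0 0 + M 1 0 * (2 * θ0) + M 2 0 * (2 * θ0) ^ 2 / 2
      + M 3 ξ1 * (2 * θ0) ^ 3 / 6 := by simp only [hMdef]; exact he1
  have he2' : M 0 θ0 = M 0 0 + M 1 0 * θ0 + M 2 0 * θ0 ^ 2 / 2 + M 3 ξ2 * θ0 ^ 3 / 6 := by simp only [hMdef]; exact he2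
  have he3' : M 1 θ0 = M 1 0 + M 2 0 * θ0 + M 3 ξ3 * θ0 ^ 2 / 2 := by simp only [hMdef]; exact he3
  rw [hM00, hM10, hM20] at he1' he2'
  rw [hM10, hM20, hcrit] at he3'
  have hr1 := abs_le.mp (hM3' ξ1 (Ioo_subset_Icc_self hξ1))
  have hr2 := abs_le.mp (hM3' ξ2 ⟨hξ2.1.le, by linarith [hξ2.2]⟩)
  have hr3 := abs_le.mp (hM3' ξ3 ⟨hξ3.1.le, by linarith [hξ3.2]⟩)
  have hcube : (0:ℝ) ≤ θ0 ^ 3 := by positivity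
  -- products for linarith
  have p1 : M 3 ξ1 * θ0 ^ 3 ≤ CM * θ0 ^ 3 := mul_le_mul_of_nonneg_right hr1.2 hcube
  have p2 : -CM * θ0 ^ 3 ≤ M 3 ξ2 * θ0 ^ 3 := mul_le_mul_of_nonneg_right hr2.1 hcube
  have p3a : -CM * θ0 ^ 3 ≤ M 3 ξ3 * θ0 ^ 3 := mul_le_mul_of_nonneg_right hr3.1 hcube
  have p3b : M 3 ξ3 * θ0 ^ 3 ≤ CM * θ0 ^ 3 := mul_le_mul_of_nonneg_right hr3.2 hcube
  have hq : μ2 * θ0 = -μ - M 3 ξ3 * θ0 ^ 2 / 2 := by linarith [he3']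
  have hq2 : μ2 * θ0 ^ 2 = -μ * θ0 - M 3 ξ3 * θ0 ^ 3 / 2 := by
    calc μ2 * θ0 ^ 2 = (μ2 * θ0) * θ0 := by ring
      _ = (-μ - M 3 ξ3 * θ0 ^ 2 / 2) * θ0 := by rw [hq]
      _ = -μ * θ0 - M 3 ξ3 * θ0 ^ 3 / 2 := by ring
  -- numerator and denominator bounds
  have hNum : M 0 (2 * θ0) ≤ 1 + 7 / 3 * (CM * θ0 ^ 3) := by linarith only [he1', hq2, p1, p3a]
  have hDen : 1 - (|μ| * θ0 / 2 + 5 / 12 * (CM * θ0 ^ 3)) ≤ M 0 θ0 := by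
    rw [hμeq] at he2'
    have hq2' := hq2
    rw [hμeq] at hq2'
    linarith only [he2', hq2', p2, p3b]
  -- size bounds
  have hA : |μ| * θ0 ≤ cm * μ ^ 2 := by
    have h := mul_le_mul_of_nonneg_left hTle (abs_nonneg μ)
    have h2 : |μ| * (cm * |μ|) = cm * μ ^ 2 := by rw [← sq_abs μ]; ring
    linarith only [h, h2]
  have hB : CM * θ0 ^ 3 ≤ CM * cm ^ 3 * |μ| ^ 3 := by
    have h3 := pow_le_pow_left₀ hT0 hTle 3
    have h4 := mul_le_mul_of_nonneg_left h3 hCM0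
    have h5 : CM * (cm * |μ|) ^ 3 = CM * cm ^ 3 * |μ| ^ 3 := by ring
    linarith only [h4, h5]
  have hBnn : 0 ≤ CM * θ0 ^ 3 := by positivity
  have hAnn : 0 ≤ |μ| * θ0 := mul_nonneg (abs_nonneg μ) hT0
  obtain ⟨L, hLdef⟩ : ∃ L : ℝ, L = |μ| * θ0 / 2 + 5 / 12 * (CM * θ0 ^ 3) := ⟨_, rfl⟩
  have hL0 : 0 ≤ L := by rw [hLdef]; positivity
  have hcmμ2 : 0 ≤ cm * μ ^ 2 := by positivity
  have hcmB : 0 ≤ CM * cm ^ 3 * |μ| ^ 3 := by positivity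
  have hL2 : L ≤ 1 / 2 := by rw [hLdef]; linarith only [hA, hB, hc2, hcmμ2, hcmB]
  have hden : 0 < 1 - L := by linarith only [hL2]
  have hDenL : 1 - L ≤ M 0 θ0 := by rw [hLdef]; exact hDen
  have hMtpos : 0 < M 0 θ0 := lt_of_lt_of_le hden hDenL
  obtain ⟨c, hcdef⟩ : ∃ c : ℝ, c = 7 / 3 * (CM * θ0 ^ 3) := ⟨_, rfl⟩
  have hNumc : M 0 (2 * θ0) ≤ 1 + c := by rw [hcdef]; exact hNum
  have hc0 : 0 ≤ c := by rw [hcdef]; positivity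
  -- ratio bound
  have hratio : M 0 (2 * θ0) / (M 0 θ0) ^ 2 ≤ Real.exp (c + 4 * L) := by
    have h1 : M 0 (2 * θ0) / (M 0 θ0) ^ 2 ≤ (1 + c) / (1 - L) ^ 2 :=
      div_le_div₀ (by positivity) hNumc (by positivity) (pow_le_pow_left₀ hden.le hDenL 2)
    refine le_trans h1 ?_
    rw [div_le_iff₀ (by positivity)]
    have he1e : 1 + c ≤ Real.exp c := by linarith only [Real.add_one_le_exp c]
    have he2e : 1 + 2 * L ≤ Real.exp (2 * L) := by linarith only [Real.add_one_le_exp (2 * L)]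
    have hube : (1:ℝ) ≤ (1 + 2 * L) * (1 - L) := by
      have hp := mul_nonneg hL0 (by linarith only [hL2] : (0:ℝ) ≤ 1 / 2 - L)
      nlinarith only [hp]
    have hx2 : (1:ℝ) ≤ Real.exp (2 * L) * (1 - L) :=
      le_trans hube (mul_le_mul_of_nonneg_right he2e hden.le)
    have hx3 : (1:ℝ) ≤ (Real.exp (2 * L) * (1 - L)) ^ 2 := by nlinarith only [hx2]
    have hexpeq : Real.exp (c + 4 * L) * (1 - L) ^ 2
        = Real.exp c * (Real.exp (2 * L) * (1 - L)) ^ 2 := by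
      have h4L : Real.exp (c + 4 * L) = Real.exp c * Real.exp (2 * L) ^ 2 := by
        rw [pow_two, ← Real.exp_add, ← Real.exp_add]
        ring_nf
      rw [h4L, mul_pow]
      ring
    rw [hexpeq]
    calc (1:ℝ) + c ≤ Real.exp c := he1e
      _ = Real.exp c * 1 := by ring
      _ ≤ Real.exp c * (Real.exp (2 * L) * (1 - L)) ^ 2 :=
          mul_le_mul_of_nonneg_left hx3 (Real.exp_pos c).le
  -- conclude
  simp only [hmgf]
  have hrnn : 0 ≤ M 0 (2 * θ0) / (M 0 θ0) ^ 2 := by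
    have h : 0 ≤ M 0 (2 * θ0) := by rw [← hmgf]; exact mgf_nonneg
    exact div_nonneg h (sq_nonneg _)
  calc (M 0 (2 * θ0) / (M 0 θ0) ^ 2) ^ ((μ ^ 2)⁻¹ / 2)
      ≤ (Real.exp (c + 4 * L)) ^ ((μ ^ 2)⁻¹ / 2) := Real.rpow_le_rpow hrnn hratio hp0
    _ = Real.exp ((c + 4 * L) * ((μ ^ 2)⁻¹ / 2)) := (Real.exp_mul _ _).symm
    _ ≤ Real.exp (2 * CM * cm ^ 2 + 4 * cm) := by
        rw [Real.exp_le_exp]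
        have hEle : c + 4 * L ≤ (2 * cm + 4 * (CM * cm ^ 3 * |μ|)) * μ ^ 2 := by
          rw [hcdef, hLdef]
          have hm3 : |μ| ^ 3 = |μ| * μ ^ 2 := by rw [pow_succ, sq_abs]; ring
          have hB2 := hB
          rw [hm3] at hB2
          linarith only [hA, hB2]
        have heq2 : ((2 * cm + 4 * (CM * cm ^ 3 * |μ|)) * μ ^ 2) * ((μ ^ 2)⁻¹ / 2)
            = cm + 2 * (CM * cm ^ 3 * |μ|) := by
          have hμne : μ ≠ 0 := fun h => by simp [h] at hμ2pos
          field_simp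
          ring
        calc (c + 4 * L) * ((μ ^ 2)⁻¹ / 2)
            ≤ ((2 * cm + 4 * (CM * cm ^ 3 * |μ|)) * μ ^ 2) * ((μ ^ 2)⁻¹ / 2) :=
              mul_le_mul_of_nonneg_right hEle hp0
          _ = cm + 2 * (CM * cm ^ 3 * |μ|) := heq2
          _ ≤ 2 * CM * cm ^ 2 + 4 * cm := by
              rcases le_or_gt (cm * |μ|) 1 with hsm | hlg
              · have hkey : CM * cm ^ 3 * |μ| ≤ CM * cm ^ 2 := by
                  have hp := mul_nonneg (by linarith only [hsm] : (0:ℝ) ≤ 1 - cm * |μ|)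
                    (mul_nonneg hCM0 (sq_nonneg cm))
                  nlinarith only [hp]
                linarith only [hkey, hcm0]
              · have h1 : cm * |μ| * |μ| ≤ 1 / 2 := by
                  have hsq : cm * |μ| ^ 2 = cm * μ ^ 2 := by rw [sq_abs]
                  linarith only [hc2, hcmB, hsq]
                have h2 : |μ| < 1 / 2 := by
                  have hp := mul_pos (sub_pos.mpr hlg) habs0
                  nlinarith only [hp, h1]
                have h3 : 2 < cm := by
                  have hp := mul_pos (by linarith only [h2] : (0:ℝ) < 1 / 2 - |μ|) hcm0
                  nlinarith only [hp, hlg]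
                have h4 : 0 ≤ CM * cm ^ 2 := mul_nonneg hCM0 (sq_nonneg cm)
                linarith only [hc3, h3, h4]
end
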